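/- arXiv:2205.13040 — 2 statements merged into one kernel-verified Lean document; each statement's English description precedes it below -/
import Mathlib

section
/- Coercivity of the relative entropy (Lemma 4.1): Let Σ* ⊂ ℝ^d be a nonempty closed set, let c, L, M > 0, let μ be a finite Borel measure on ℝ^d and ν : ℝ^d → ℝ^d a Borel vector field with |ν| = 1 μ-almost everywhere. Let ξ : ℝ^d → ℝ^d be Borel measurable with |ξ(x)| ≤ max{1 − c·dist(x,Σ*)², 0} for all x, and let ϑ : ℝ^d → ℝ be Borel measurable with |ϑ(x)| ≤ min{L·dist(x,Σ*), M} for all x. Then: (1) ∫ (1/2)|ν − ξ|² dμ ≤ ∫ (1 − ⟨ν, ξ⟩) dμ, and (2) ∫ ϑ² dμ ≤ max{L²/c, M²} · ∫ (1 − ⟨ν, ξ⟩) dμ. -/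
open MeasureTheory Metric Set

/-- **Coercivity of the relative entropy** (Lemma 4.1). If `|ξ| ≤ max{1 − c dist²(·,Σ*), 0}`
and `|ϑ| ≤ min{L dist(·,Σ*), M}`, then the tilt excess `∫ ½|ν − ξ|² dμ` and the weighted
volume term `∫ ϑ² dμ` are controlled by the relative entropy `∫ (1 − ⟨ν, ξ⟩) dμ`. -/
theorem coercivity_of_relative_entropy
    {d : ℕ} (Sig : Set (EuclideanSpace ℝ (Fin d))) (hne : Sig.Nonempty) (hcl : IsClosed Sig)
    (c L M : ℝ) (hc : 0 < c) (hL : 0 < L) (hM : 0 < M)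
    (μ : Measure (EuclideanSpace ℝ (Fin d))) [IsFiniteMeasure μ]
    (ν : EuclideanSpace ℝ (Fin d) → EuclideanSpace ℝ (Fin d))
    (hν_meas : Measurable ν) (hν_unit : ∀ᵐ x ∂μ, ‖ν x‖ = 1)
    (ξ : EuclideanSpace ℝ (Fin d) → EuclideanSpace ℝ (Fin d))
    (hξ_meas : Measurable ξ)
    (hξ_short : ∀ x, ‖ξ x‖ ≤ max (1 - c * infDist x Sig ^ 2) 0)
    (ϑ : EuclideanSpace ℝ (Fin d) → ℝ)
    (hϑ_meas : Measurable ϑ)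
    (hϑ_bdd : ∀ x, |ϑ x| ≤ min (L * infDist x Sig) M) :
    (∫ x, (1 / 2) * ‖ν x - ξ x‖ ^ 2 ∂μ ≤ ∫ x, (1 - (inner ℝ (ν x) (ξ x) : ℝ)) ∂μ) ∧
      ∫ x, ϑ x ^ 2 ∂μ
        ≤ max (L ^ 2 / c) (M ^ 2) * ∫ x, (1 - (inner ℝ (ν x) (ξ x) : ℝ)) ∂μ := by
  set K := max (L ^ 2 / c) (M ^ 2) with hK
  have hK0 : 0 ≤ K := le_trans (by positivity : (0:ℝ) ≤ M ^ 2) (le_max_right _ _)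
  have hKM : M ^ 2 ≤ K := le_max_right _ _
  have hKL : L ^ 2 / c ≤ K := le_max_left _ _
  have hξ1 : ∀ x, ‖ξ x‖ ≤ 1 := by
    intro x
    refine (hξ_short x).trans ?_
    have h0 : 0 ≤ c * infDist x Sig ^ 2 := by positivity
    exact max_le (by linarith) zero_le_one
  have hf_meas : Measurable fun x => 1 - (inner ℝ (ν x) (ξ x) : ℝ) :=
    measurable_const.sub (hν_meas.inner hξ_meas)
  have hf_int : Integrable (fun x => 1 - (inner ℝ (ν x) (ξ x) : ℝ)) μ := by
    refine (integrable_const (2:ℝ)).mono' hf_meas.aestronglyMeasurable ?_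
    filter_upwards [hν_unit] with x hx
    have h := abs_real_inner_le_norm (ν x) (ξ x)
    rw [hx, one_mul] at h
    have h1 := abs_le.mp (h.trans (hξ1 x))
    rw [Real.norm_eq_abs, abs_le]
    constructor <;> linarith [h1.1, h1.2]
  have hg_meas : Measurable fun x => (1/2 : ℝ) * ‖ν x - ξ x‖ ^ 2 :=
    measurable_const.mul (((hν_meas.sub hξ_meas).norm).pow_const 2)
  have hg_int : Integrable (fun x => (1/2 : ℝ) * ‖ν x - ξ x‖ ^ 2) μ := by
    refine (integrable_const (2:ℝ)).mono' hg_meas.aestronglyMeasurable ?_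
    filter_upwards [hν_unit] with x hx
    have h1 : ‖ν x - ξ x‖ ≤ 2 := by
      calc ‖ν x - ξ x‖ ≤ ‖ν x‖ + ‖ξ x‖ := norm_sub_le _ _
      _ ≤ 2 := by rw [hx]; linarith [hξ1 x]
    have h0 : (0:ℝ) ≤ ‖ν x - ξ x‖ := norm_nonneg _
    rw [Real.norm_eq_abs, abs_of_nonneg (by positivity)]
    nlinarith
  have hϑ_int : Integrable (fun x => ϑ x ^ 2) μ := by
    refine (integrable_const (M ^ 2 : ℝ)).mono' (hϑ_meas.pow_const 2).aestronglyMeasurable ?_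
    refine Filter.Eventually.of_forall fun x => ?_
    have h := (hϑ_bdd x).trans (min_le_right _ _)
    have h0 := abs_nonneg (ϑ x)
    rw [Real.norm_eq_abs, abs_of_nonneg (by positivity : (0:ℝ) ≤ ϑ x ^ 2)]
    nlinarith [sq_abs (ϑ x)]
  have hpt1 : ∀ᵐ x ∂μ, (1/2 : ℝ) * ‖ν x - ξ x‖ ^ 2 ≤ 1 - (inner ℝ (ν x) (ξ x) : ℝ) := by
    filter_upwards [hν_unit] with x hx
    have hexp : ‖ν x - ξ x‖ ^ 2 = ‖ν x‖ ^ 2 - 2 * (inner ℝ (ν x) (ξ x) : ℝ) + ‖ξ x‖ ^ 2 :=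
      norm_sub_sq_real (ν x) (ξ x)
    have h2 : ‖ξ x‖ ^ 2 ≤ 1 := by nlinarith [hξ1 x, norm_nonneg (ξ x)]
    rw [hexp, hx]; nlinarith
  have hpt2 : ∀ᵐ x ∂μ, ϑ x ^ 2 ≤ K * (1 - (inner ℝ (ν x) (ξ x) : ℝ)) := by
    filter_upwards [hν_unit] with x hx
    set D := infDist x Sig with hD
    have hD0 : 0 ≤ D := infDist_nonneg
    have hinner := abs_real_inner_le_norm (ν x) (ξ x)
    rw [hx, one_mul] at hinner
    have hinner' := (abs_le.mp hinner).2
    have hshort := hξ_short x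
    have hnn : 0 ≤ ‖ξ x‖ := norm_nonneg _
    have hϑ := hϑ_bdd x
    have hϑsq : ϑ x ^ 2 ≤ min (L * D) M ^ 2 := by
      have h0 := abs_nonneg (ϑ x)
      nlinarith [sq_abs (ϑ x), le_min (by positivity : (0:ℝ) ≤ L * D) hM.le]
    rcases le_or_gt (c * D ^ 2) 1 with hcase | hcase
    · have hmax : max (1 - c * D ^ 2) 0 = 1 - c * D ^ 2 := max_eq_left (by linarith)
      rw [hmax] at hshort
      have hlow : c * D ^ 2 ≤ 1 - (inner ℝ (ν x) (ξ x) : ℝ) := by linarith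
      have hmin : min (L * D) M ^ 2 ≤ (L * D) ^ 2 :=
        pow_le_pow_left₀ (le_min (by positivity) hM.le) (min_le_left _ _) 2
      have h1 : L ^ 2 ≤ K * c := by rw [div_le_iff₀ hc] at hKL; linarith
      have h2 : L ^ 2 * D ^ 2 ≤ K * c * D ^ 2 :=
        mul_le_mul_of_nonneg_right h1 (sq_nonneg D)
      have h3 : K * (c * D ^ 2) ≤ K * (1 - (inner ℝ (ν x) (ξ x) : ℝ)) :=
        mul_le_mul_of_nonneg_left hlow hK0
      have h4 : (L * D) ^ 2 = L ^ 2 * D ^ 2 := by ring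
      linarith [hϑsq.trans hmin]
    · have hmax : max (1 - c * D ^ 2) 0 = 0 := max_eq_right (by linarith)
      rw [hmax] at hshort
      have hξ0 : ‖ξ x‖ = 0 := le_antisymm hshort hnn
      have h0 : (inner ℝ (ν x) (ξ x) : ℝ) = 0 := by
        have h := hinner
        rw [hξ0] at h
        exact abs_eq_zero.mp (le_antisymm h (abs_nonneg _))
      have hmin : min (L * D) M ^ 2 ≤ M ^ 2 :=
        pow_le_pow_left₀ (le_min (by positivity) hM.le) (min_le_right _ _) 2
      rw [h0, sub_zero, mul_one]
      linarith [hϑsq.trans hmin]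
  refine ⟨integral_mono_ae hg_int hf_int hpt1, ?_⟩
  calc ∫ x, ϑ x ^ 2 ∂μ ≤ ∫ x, K * (1 - (inner ℝ (ν x) (ξ x) : ℝ)) ∂μ :=
        integral_mono_ae hϑ_int (hf_int.const_mul K) hpt2
    _ = K * ∫ x, (1 - (inner ℝ (ν x) (ξ x) : ℝ)) ∂μ := MeasureTheory.integral_const_mul K _
end

section
/- Gauss–Green antisymmetry identity: Let χ : ℝ^d → {0,1} be measurable with {χ = 1} of finite Lebesgue measure and let (μ, ν) be a Gauss–Green pair for χ. Let B, ξ : ℝ^d → ℝ^d be C² vector fields with ξ compactly supported. Then ∫_{ℝ^d} ⟨ν(x), (∇·(B⊗ξ − ξ⊗B))(x)⟩ dμ(x) = 0, where (∇·M)_j := ∑_i ∂_i M_{ij} and (B⊗ξ)_{ij} = B_i ξ_j. -/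
open MeasureTheory Metric Set

noncomputable section

/-- Spatial divergence of a vector field on `ℝ^d`. -/
def vdiv {d : ℕ} (f : EuclideanSpace ℝ (Fin d) → EuclideanSpace ℝ (Fin d))
    (x : EuclideanSpace ℝ (Fin d)) : ℝ :=
  ∑ i, fderiv ℝ f x (EuclideanSpace.single i 1) i

/-- A Gauss–Green pair `(μ, ν)` for an indicator-type function `χ : ℝ^d → ℝ`:
`μ` is a finite Borel measure, `ν` is a Borel unit (μ-a.e.) vector field, and the
Gauss–Green formula `∫ χ (∇·ψ) dx = ∫ ⟨ψ, ν⟩ dμ` holds for all compactly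
supported `C¹` vector fields `ψ`. -/
structure IsGaussGreenPair {d : ℕ} (χ : EuclideanSpace ℝ (Fin d) → ℝ)
    (μ : Measure (EuclideanSpace ℝ (Fin d)))
    (ν : EuclideanSpace ℝ (Fin d) → EuclideanSpace ℝ (Fin d)) : Prop where
  finite : IsFiniteMeasure μ
  nu_meas : Measurable ν
  nu_unit : ∀ᵐ x ∂μ, ‖ν x‖ = 1
  gauss_green : ∀ ψ : EuclideanSpace ℝ (Fin d) → EuclideanSpace ℝ (Fin d),
    ContDiff ℝ 1 ψ → HasCompactSupport ψ →
    ∫ x, χ x * vdiv ψ x = ∫ x, (inner ℝ (ψ x) (ν x) : ℝ) ∂μ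

/-- Second derivative applied pointwise: moving a constant vector out of `fderiv`. -/
lemma fderiv_fderiv_apply_aux {d : ℕ} {g : EuclideanSpace ℝ (Fin d) → ℝ}
    (hg : ContDiff ℝ 2 g) (x v w : EuclideanSpace ℝ (Fin d)) :
    fderiv ℝ (fun z => fderiv ℝ g z v) x w = fderiv ℝ (fderiv ℝ g) x w v := by
  have hdiff : DifferentiableAt ℝ (fderiv ℝ g) x :=
    ((hg.fderiv_right (m := 1) le_rfl).differentiable one_ne_zero) x
  have h := fderiv_clm_apply (c := fderiv ℝ g) (u := fun _ => v) hdiff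
    (differentiableAt_const v)
  rw [h]
  simp

/-- Symmetry of the second derivative of a `C²` function. -/
lemma sndderiv_symm_aux {d : ℕ} {g : EuclideanSpace ℝ (Fin d) → ℝ}
    (hg : ContDiff ℝ 2 g) (x v w : EuclideanSpace ℝ (Fin d)) :
    fderiv ℝ (fderiv ℝ g) x v w = fderiv ℝ (fderiv ℝ g) x w v :=
  (hg.contDiffAt.isSymmSndFDerivAt (by simp)).eq v w

/-- **Gauss–Green antisymmetry identity**: for a Gauss–Green pair `(μ, ν)` of an
indicator `χ` and `C²` vector fields `B, ξ` with `ξ` compactly supported,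
`∫ ⟨ν, ∇·(B⊗ξ − ξ⊗B)⟩ dμ = 0`, where `(∇·M)_j = ∑_i ∂_i M_{ij}`. -/
theorem gauss_green_antisymmetry
    {d : ℕ} (χ : EuclideanSpace ℝ (Fin d) → ℝ)
    (hχ_meas : Measurable χ) (hχ01 : ∀ x, χ x = 0 ∨ χ x = 1)
    (hχ_fin : volume {x | χ x = 1} < ⊤)
    (μ : Measure (EuclideanSpace ℝ (Fin d)))
    (ν : EuclideanSpace ℝ (Fin d) → EuclideanSpace ℝ (Fin d))
    (hgg : IsGaussGreenPair χ μ ν)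
    (B ξ : EuclideanSpace ℝ (Fin d) → EuclideanSpace ℝ (Fin d))
    (hB : ContDiff ℝ 2 B) (hξ : ContDiff ℝ 2 ξ) (hξ_supp : HasCompactSupport ξ) :
    ∫ x, ∑ j, ν x j *
        (∑ i, fderiv ℝ (fun z => B z i * ξ z j - ξ z i * B z j) x
          (EuclideanSpace.single i 1)) ∂μ = 0 := by
  classical
  set e : Fin d → EuclideanSpace ℝ (Fin d) := fun i => EuclideanSpace.single i 1 with he
  set f : Fin d → Fin d → EuclideanSpace ℝ (Fin d) → ℝ :=
    fun i j => fun z => B z i * ξ z j - ξ z i * B z j with hf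
  have hBc : ∀ i, ContDiff ℝ 2 fun z : EuclideanSpace ℝ (Fin d) => B z i :=
    fun i => contDiff_euclidean.mp hB i
  have hξc : ∀ i, ContDiff ℝ 2 fun z : EuclideanSpace ℝ (Fin d) => ξ z i :=
    fun i => contDiff_euclidean.mp hξ i
  have hfc : ∀ i j, ContDiff ℝ 2 (f i j) := fun i j =>
    ((hBc i).mul (hξc j)).sub ((hξc i).mul (hBc j))
  have hDc : ∀ i j, ContDiff ℝ 1 fun z : EuclideanSpace ℝ (Fin d) =>
      fderiv ℝ (f i j) z (e i) := fun i j =>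
    ((hfc i j).fderiv_right (m := 1) le_rfl).clm_apply contDiff_const
  have hDdiff : ∀ i j (x : EuclideanSpace ℝ (Fin d)),
      DifferentiableAt ℝ (fun z => fderiv ℝ (f i j) z (e i)) x :=
    fun i j x => ((hDc i j).differentiable one_ne_zero) x
  set ψ : EuclideanSpace ℝ (Fin d) → EuclideanSpace ℝ (Fin d) :=
    fun x => (WithLp.equiv 2 (Fin d → ℝ)).symm
      (fun j => ∑ i, fderiv ℝ (f i j) x (e i)) with hψ
  have hψ_apply : ∀ (x : EuclideanSpace ℝ (Fin d)) j,
      ψ x j = ∑ i, fderiv ℝ (f i j) x (e i) := fun x j => rfl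
  -- ψ is C¹
  have hψC1 : ContDiff ℝ 1 ψ := by
    refine contDiff_euclidean.mpr fun j => ?_
    have : (fun x => ψ x j) = fun x => ∑ i, fderiv ℝ (f i j) x (e i) :=
      funext fun x => hψ_apply x j
    rw [this]
    exact ContDiff.sum fun i _ => hDc i j
  -- ψ has compact support
  have hψ0 : ∀ x, x ∉ tsupport ξ → ψ x = 0 := by
    intro x hx
    have hev : ∀ᶠ z in nhds x, ξ z = 0 := by
      filter_upwards [(isClosed_tsupport ξ).isOpen_compl.mem_nhds hx] with z hz
      exact image_eq_zero_of_notMem_tsupport hz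
    have hfd : ∀ i j, fderiv ℝ (f i j) x = 0 := by
      intro i j
      have hfe : f i j =ᶠ[nhds x] fun _ => (0 : ℝ) := by
        filter_upwards [hev] with z hz
        have hzk : ∀ k, ξ z k = 0 := fun k => by rw [hz]; rfl
        simp [hf, hzk]
      rw [hfe.fderiv_eq]
      exact fderiv_const_apply 0
    refine PiLp.ext fun j => ?_
    rw [hψ_apply x j]
    simp [hfd]
  have hψsupp : HasCompactSupport ψ := by
    have hsub : tsupport ψ ⊆ tsupport ξ := by
      refine closure_minimal (fun x hx => ?_) (isClosed_tsupport ξ)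
      by_contra hxs
      exact hx (hψ0 x hxs)
    exact IsCompact.of_isClosed_subset hξ_supp (isClosed_tsupport ψ) hsub
  -- divergence of ψ vanishes
  have hdiv0 : ∀ x, vdiv ψ x = 0 := by
    intro x
    have hψdiff : DifferentiableAt ℝ ψ x := (hψC1.differentiable one_ne_zero) x
    have hstep : ∀ i, fderiv ℝ ψ x (e i) i
        = ∑ j, fderiv ℝ (fderiv ℝ (f j i)) x (e i) (e j) := by
      intro i
      have hproj0 := (EuclideanSpace.proj (𝕜 := ℝ) i).hasFDerivAt.comp x hψdiff.hasFDerivAt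
      have hproj : HasFDerivAt (fun z => ψ z i)
          ((EuclideanSpace.proj (𝕜 := ℝ) i).comp (fderiv ℝ ψ x)) x := hproj0
      have h1 : fderiv ℝ ψ x (e i) i = fderiv ℝ (fun z => ψ z i) x (e i) := by
        rw [hproj.fderiv]; rfl
      have h2 : (fun z => ψ z i) = fun z => ∑ j, fderiv ℝ (f j i) z (e j) :=
        funext fun z => hψ_apply z i
      rw [h1, h2, fderiv_fun_sum fun j _ => hDdiff j i x]
      rw [ContinuousLinearMap.sum_apply]
      exact Finset.sum_congr rfl fun j _ => fderiv_fderiv_apply_aux (hfc j i) x (e j) (e i)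
    have hanti : ∀ i j (v w : EuclideanSpace ℝ (Fin d)),
        fderiv ℝ (fderiv ℝ (f j i)) x v w = -(fderiv ℝ (fderiv ℝ (f i j)) x v w) := by
      intro i j v w
      have hfn : f j i = fun z => -(f i j z) := funext fun z => by simp [hf]; ring
      have h1 : fderiv ℝ (f j i) = fun z => -(fderiv ℝ (f i j) z) := by
        funext z
        rw [hfn, fderiv_fun_neg]
      rw [h1, fderiv_fun_neg]
      simp
    have hsym : ∀ i j (v w : EuclideanSpace ℝ (Fin d)),
        fderiv ℝ (fderiv ℝ (f i j)) x v w = fderiv ℝ (fderiv ℝ (f i j)) x w v :=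
      fun i j v w => sndderiv_symm_aux (hfc i j) x v w
    have hvd : vdiv ψ x = ∑ i, ∑ j, fderiv ℝ (fderiv ℝ (f j i)) x (e i) (e j) := by
      unfold vdiv
      exact Finset.sum_congr rfl fun i _ => hstep i
    set T : ℝ := ∑ i, ∑ j, fderiv ℝ (fderiv ℝ (f i j)) x (e i) (e j) with hT
    have hS1 : vdiv ψ x = T := by
      rw [hvd]
      calc ∑ i, ∑ j, fderiv ℝ (fderiv ℝ (f j i)) x (e i) (e j)
          = ∑ i, ∑ j, fderiv ℝ (fderiv ℝ (f j i)) x (e j) (e i) :=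
            Finset.sum_congr rfl fun i _ => Finset.sum_congr rfl fun j _ => hsym j i (e i) (e j)
        _ = ∑ j, ∑ i, fderiv ℝ (fderiv ℝ (f j i)) x (e j) (e i) := Finset.sum_comm
        _ = T := rfl
    have hS2 : vdiv ψ x = -T := by
      rw [hvd, hT]
      rw [← Finset.sum_neg_distrib]
      refine Finset.sum_congr rfl fun i _ => ?_
      rw [← Finset.sum_neg_distrib]
      exact Finset.sum_congr rfl fun j _ => hanti i j (e i) (e j)
    linarith [hS1, hS2]
  -- put everything together
  have hint : (fun x => ∑ j, ν x j * (∑ i, fderiv ℝ (f i j) x (e i)))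
      = fun x => (inner ℝ (ψ x) (ν x) : ℝ) := by
    funext x
    rw [PiLp.inner_apply]
    refine Finset.sum_congr rfl fun j _ => ?_
    rw [hψ_apply x j]
    simp only [RCLike.inner_apply, conj_trivial]
  rw [hint, ← hgg.gauss_green ψ hψC1 hψsupp]
  simp [hdiv0]
end
end
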